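/- For every real number x with 0 < x < π/2, log(sec x) = ∑_{k=1}^∞ (2^{2k}(2^{2k}-1)|B_{2k}| / (2k·(2k)!)) · x^{2k}, where B_n denotes the n-th Bernoulli number. -/

import Mathlib

open Real

noncomputable def Zval (m : ℕ) : ℝ :=
  (-1 : ℝ) ^ (m + 1) * (2 : ℝ) ^ (2 * m - 1) * π ^ (2 * m) *
    ((bernoulli (2 * m) : ℚ) : ℝ) / (Nat.factorial (2 * m) : ℝ)

lemma Zval_pos (m : ℕ) (hm : m ≠ 0) : 0 < Zval m := by
  have h := hasSum_zeta_nat (k := m) hm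
  have h1 : (1 : ℝ) ≤ (-1 : ℝ) ^ (m + 1) * (2 : ℝ) ^ (2 * m - 1) * π ^ (2 * m) *
      ((bernoulli (2 * m) : ℚ) : ℝ) / (Nat.factorial (2 * m) : ℝ) := by
    have hmem : HasSum (fun n : ℕ => if n = 1 then (1 : ℝ) else 0) 1 := hasSum_ite_eq 1 1
    refine hasSum_le (fun n => ?_) hmem h
    by_cases hn : n = 1
    · simp [hn]
    · simp only [hn, if_false]
      positivity
  exact lt_of_lt_of_le one_pos (by simpa [Zval] using h1)

lemma abs_bern (m : ℕ) (hm : m ≠ 0) :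
    |((bernoulli (2 * m) : ℚ) : ℝ)| = (-1 : ℝ) ^ (m + 1) * ((bernoulli (2 * m) : ℚ) : ℝ) := by
  have hZ := Zval_pos m hm
  unfold Zval at hZ
  have hc : (0:ℝ) < (2 : ℝ) ^ (2 * m - 1) * π ^ (2 * m) / (Nat.factorial (2 * m) : ℝ) := by positivity
  have hsB : 0 < (-1 : ℝ) ^ (m + 1) * ((bernoulli (2 * m) : ℚ) : ℝ) := by
    have hre : (-1 : ℝ) ^ (m + 1) * (2 : ℝ) ^ (2 * m - 1) * π ^ (2 * m) *
        ((bernoulli (2 * m) : ℚ) : ℝ) / (Nat.factorial (2 * m) : ℝ) =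
        ((-1 : ℝ) ^ (m + 1) * ((bernoulli (2 * m) : ℚ) : ℝ)) *
          ((2 : ℝ) ^ (2 * m - 1) * π ^ (2 * m) / (Nat.factorial (2 * m) : ℝ)) := by ring
    rw [hre] at hZ
    rcases mul_pos_iff.mp hZ with ⟨h1, _⟩ | ⟨_, h2⟩
    · exact h1
    · linarith
  calc |((bernoulli (2 * m) : ℚ) : ℝ)|
      = |(-1 : ℝ) ^ (m + 1) * ((bernoulli (2 * m) : ℚ) : ℝ)| := by
        rw [abs_mul, abs_pow, abs_neg, abs_one, one_pow, one_mul]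
    _ = (-1 : ℝ) ^ (m + 1) * ((bernoulli (2 * m) : ℚ) : ℝ) := abs_of_pos hsB

/-- Series for `-log (sin y / y)` for `0 < y < π`. -/
lemma hasSum_neg_log_sin (y : ℝ) (h0 : 0 < y) (h1 : y < π) :
    HasSum (fun n : ℕ => (y / π) ^ (2 * (n + 1)) * Zval (n + 1) / ((n : ℝ) + 1))
      (-Real.log (Real.sin y / y)) := by
  set t : ℕ → ℝ := fun k => (y / π) ^ 2 / ((k : ℝ) + 1) ^ 2 with ht
  have hyπ : 0 < y / π := div_pos h0 pi_pos
  have hyπ1 : y / π < 1 := (div_lt_one pi_pos).2 h1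
  have htpos : ∀ k, 0 < t k := fun k => by positivity
  have htlt : ∀ k, t k < 1 := by
    intro k
    have h2 : (y / π) ^ 2 < 1 := by nlinarith
    have h3 : (1:ℝ) ≤ ((k : ℝ) + 1) ^ 2 := by nlinarith [Nat.cast_nonneg (α := ℝ) k]
    calc t k ≤ (y / π) ^ 2 / 1 :=
          div_le_div_of_nonneg_left (by positivity) one_pos h3
      _ < 1 := by rwa [div_one]
  set g : ℕ → ℝ := fun k => -Real.log (1 - t k) with hg
  have hgnonneg : ∀ k, 0 ≤ g k := by
    intro k
    have : Real.log (1 - t k) ≤ 0 :=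
      Real.log_nonpos (by nlinarith [htpos k, htlt k]) (by nlinarith [htpos k])
    simpa [hg] using neg_nonneg.2 this
  have hsin : 0 < Real.sin y / y := div_pos (Real.sin_pos_of_pos_of_lt_pi h0 h1) h0
  have htendsto : Filter.Tendsto (fun n => ∑ k ∈ Finset.range n, g k)
      Filter.atTop (nhds (-Real.log (Real.sin y / y))) := by
    have hE := Real.tendsto_euler_sin_prod (y / π)
    have hπy : π * (y / π) = y := by field_simp
    rw [hπy] at hE
    have hE2 : Filter.Tendsto
        (fun n : ℕ => ∏ j ∈ Finset.range n, ((1 : ℝ) - (y / π) ^ 2 / ((j : ℝ) + 1) ^ 2))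
        Filter.atTop (nhds (Real.sin y / y)) := by
      have := hE.div_const y
      refine this.congr fun n => ?_
      field_simp
    have hlog := (hE2.log hsin.ne').neg
    refine hlog.congr fun n => ?_
    rw [Real.log_prod (fun j _ => by nlinarith [htpos j, htlt j])]
    simp [g, t]
  have hsummable : Summable g := by
    apply summable_of_sum_range_le hgnonneg
    intro n
    exact Monotone.ge_of_tendsto (f := fun n => ∑ k ∈ Finset.range n, g k)
      (fun a b hab => Finset.sum_le_sum_of_subset_of_nonneg
        (Finset.range_subset_range.2 hab) (fun i _ _ => hgnonneg i)) htendsto n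
  have hGsum : HasSum g (-Real.log (Real.sin y / y)) :=
    (hsummable.hasSum_iff_tendsto_nat).2 htendsto
  have hinner : ∀ k : ℕ, HasSum (fun n : ℕ => (t k) ^ (n + 1) / ((n : ℝ) + 1)) (g k) := by
    intro k
    have habs : |t k| < 1 := by rw [abs_of_pos (htpos k)]; exact htlt k
    simpa [hg] using hasSum_pow_div_log_of_abs_lt_one habs
  set F : ℕ × ℕ → ℝ := fun p => (t p.1) ^ (p.2 + 1) / ((p.2 : ℝ) + 1) with hF
  have hFnonneg : 0 ≤ F := fun p => by
    have := htpos p.1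
    have : (0:ℝ) < t p.1 := this
    positivity
  have hFsummable : Summable F := by
    rw [summable_prod_of_nonneg hFnonneg]
    exact ⟨fun k => (hinner k).summable,
      hsummable.congr fun k => ((hinner k).tsum_eq).symm⟩
  have hFtotal : HasSum F (-Real.log (Real.sin y / y)) := by
    have h := hFsummable.hasSum
    have htot : ∑' p, F p = -Real.log (Real.sin y / y) := by
      rw [Summable.tsum_prod hFsummable, ← hGsum.tsum_eq]
      exact tsum_congr fun k => (hinner k).tsum_eq
    rwa [htot] at h
  have hFswap : HasSum (fun p : ℕ × ℕ => F p.swap) (-Real.log (Real.sin y / y)) :=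
    (Equiv.prodComm ℕ ℕ).hasSum_iff.2 hFtotal
  refine hFswap.prod_fiberwise fun n => ?_
  have hzeta := hasSum_zeta_nat (k := n + 1) (Nat.succ_ne_zero n)
  have hzeta' : HasSum (fun k : ℕ => 1 / ((k : ℝ) + 1) ^ (2 * (n + 1))) (Zval (n + 1)) := by
    have hinj : Function.Injective (fun k : ℕ => k + 1) := fun a b h => by
      simpa using h
    have hvan : ∀ m : ℕ, m ∉ Set.range (fun k : ℕ => k + 1) →
        (1 : ℝ) / (m : ℝ) ^ (2 * (n + 1)) = 0 := by
      intro m hmem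
      have hm0 : m = 0 := by
        by_contra hc
        exact hmem ⟨m - 1, by simp; omega⟩
      simp [hm0]
    have := (Function.Injective.hasSum_iff hinj hvan).2 hzeta
    refine this.congr_fun fun k => ?_
    simp only [Function.comp_apply]
    push_cast
    ring
  have key := hzeta'.mul_left ((y / π) ^ (2 * (n + 1)) / ((n : ℝ) + 1))
  have heq : ∀ k : ℕ, (y / π) ^ (2 * (n + 1)) / ((n : ℝ) + 1) *
      (1 / ((k : ℝ) + 1) ^ (2 * (n + 1))) = F (k, n) := by
    intro k
    have hk1 : ((k : ℝ) + 1) ≠ 0 := by positivity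
    have hp : ((y / π) ^ 2 / ((k : ℝ) + 1) ^ 2) ^ (n + 1)
        = (y / π) ^ (2 * (n + 1)) / ((k : ℝ) + 1) ^ (2 * (n + 1)) := by
      rw [div_pow, ← pow_mul, ← pow_mul]
    show (y / π) ^ (2 * (n + 1)) / ((n : ℝ) + 1) * (1 / ((k : ℝ) + 1) ^ (2 * (n + 1)))
        = ((y / π) ^ 2 / ((k : ℝ) + 1) ^ 2) ^ (n + 1) / ((n : ℝ) + 1)
    rw [hp]
    ring
  have hval : (y / π) ^ (2 * (n + 1)) / ((n : ℝ) + 1) * Zval (n + 1) =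
      (y / π) ^ (2 * (n + 1)) * Zval (n + 1) / ((n : ℝ) + 1) := by ring
  rw [hval] at key
  exact key.congr_fun fun k => (heq k).symm

theorem logSec_series (x : ℝ) (hx : 0 < x) (hx2 : x < π / 2) :
    Real.log (1 / Real.cos x) =
      ∑' k : ℕ,
        (2 ^ (2 * (k + 1)) * (2 ^ (2 * (k + 1)) - 1) * |((bernoulli (2 * (k + 1)) : ℚ) : ℝ)| /
            ((2 * (k + 1) : ℕ) * (Nat.factorial (2 * (k + 1)) : ℝ))) *
          x ^ (2 * (k + 1)) := by
  have hπ : x < π := by nlinarith [pi_pos]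
  have h1 := hasSum_neg_log_sin x hx hπ
  have h2 := hasSum_neg_log_sin (2 * x) (by linarith) (by linarith)
  have h3 := h2.sub h1
  have hcos : 0 < Real.cos x := Real.cos_pos_of_mem_Ioo ⟨by linarith [pi_pos], hx2⟩
  have hsinx : 0 < Real.sin x := Real.sin_pos_of_pos_of_lt_pi hx hπ
  have hval : -Real.log (Real.sin (2 * x) / (2 * x)) - -Real.log (Real.sin x / x) =
      Real.log (1 / Real.cos x) := by
    have hs2 : Real.sin (2 * x) = 2 * Real.sin x * Real.cos x := Real.sin_two_mul x
    have hne1 : Real.sin x / x ≠ 0 := by positivity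
    have hne2 : Real.sin (2 * x) / (2 * x) ≠ 0 := by
      rw [hs2]; positivity
    have h4 : Real.sin x / x / (Real.sin (2 * x) / (2 * x)) = 1 / Real.cos x := by
      rw [hs2]
      field_simp
    calc -Real.log (Real.sin (2 * x) / (2 * x)) - -Real.log (Real.sin x / x)
        = Real.log (Real.sin x / x) - Real.log (Real.sin (2 * x) / (2 * x)) := by ring
      _ = Real.log (Real.sin x / x / (Real.sin (2 * x) / (2 * x))) :=
          (Real.log_div hne1 hne2).symm
      _ = Real.log (1 / Real.cos x) := by rw [h4]
  rw [hval] at h3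
  rw [← h3.tsum_eq]
  refine tsum_congr fun n => ?_
  rw [abs_bern (n + 1) (Nat.succ_ne_zero n)]
  unfold Zval
  have h2p : (2 : ℝ) ^ (2 * (n + 1)) = (2 : ℝ) ^ (2 * (n + 1) - 1) * 2 := by
    have h : 2 * (n + 1) = (2 * (n + 1) - 1) + 1 := by omega
    conv_lhs => rw [h]
    exact pow_succ 2 _
  have hfac : (Nat.factorial (2 * (n + 1)) : ℝ) ≠ 0 := by positivity
  have hπ0 : π ≠ 0 := pi_ne_zero
  have hn1 : ((n : ℝ) + 1) ≠ 0 := by positivity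
  have hπp : (π : ℝ) ^ (2 * (n + 1)) ≠ 0 := pow_ne_zero _ pi_ne_zero
  rw [div_pow, div_pow, mul_pow, h2p]
  push_cast
  field_simp
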